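/- For every σ > 0 and every ε ∈ (0, 1/2) there exists a constant L > 0 (depending only on σ and ε) such that for every integer K ≥ 2, every δ ∈ (0, 1/2], every Δ ∈ (0, 1], and every integer t ≥ 1: if t ≥ (L/Δ²) log(K/(δΔ)), then 4 · (σ/(1−ε)) · √( (2/t) · log( K t² π² / (12 δ) ) ) < Δ. -/

import Mathlib

open Real


private lemma se_aux_div (c Δ t : ℝ) (hc : c ≠ 0) (hΔ : Δ ≠ 0) :
    t / (256 * c ^ 2 / Δ ^ 2) = Δ ^ 2 * t / (256 * c ^ 2) := by
  field_simp

private lemma se_aux_h3 (B A Δ : ℝ) (hΔ : Δ ≠ 0) :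
    B / Δ ^ 2 * A * Δ ^ 2 = B * A := by
  field_simp

private lemma se_aux_hmul (c Δ t : ℝ) (hc : c ≠ 0) :
    32 * c ^ 2 * (Δ ^ 2 * t / (256 * c ^ 2)) = Δ ^ 2 * t / 8 := by
  field_simp; ring

private lemma se_aux_h32 (c t X : ℝ) (ht : t ≠ 0) :
    16 * c ^ 2 * (2 / t * X) = 32 * c ^ 2 * X / t := by
  field_simp; ring

set_option maxHeartbeats 1600000 in
/-- Inversion of the exploration radius of SE-CBAI: for every `σ > 0` and `ε ∈ (0, 1/2)`
there is a constant `L > 0` such that for all `K ≥ 2`, `δ ∈ (0, 1/2]`, `Δ ∈ (0, 1]` and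
integers `t ≥ 1` with `t ≥ (L / Δ²) log (K / (δ Δ))`, one has
`4 (σ/(1-ε)) √((2/t) log (K t² π² / (12 δ))) < Δ`. -/
theorem se_cbai_elimination_time (σ ε : ℝ) (hσ : 0 < σ) (hε₀ : 0 < ε) (hε₁ : ε < 1 / 2) :
    ∃ L : ℝ, 0 < L ∧
      ∀ (K : ℕ) (δ Δ : ℝ) (t : ℕ), 2 ≤ K → 0 < δ → δ ≤ 1 / 2 → 0 < Δ → Δ ≤ 1 → 1 ≤ t →
        (L / Δ ^ 2) * Real.log ((K : ℝ) / (δ * Δ)) ≤ (t : ℝ) →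
        4 * (σ / (1 - ε)) *
            Real.sqrt ((2 / (t : ℝ)) * Real.log ((K : ℝ) * (t : ℝ) ^ 2 * Real.pi ^ 2 / (12 * δ)))
          < Δ := by
  have hpisq : Real.pi ^ 2 < 12 := by nlinarith [Real.pi_lt_d2, Real.pi_pos]
  have hπ : Real.log (Real.pi ^ 2 / 12) < 0 := by
    apply Real.log_neg (by positivity)
    rw [div_lt_one (by norm_num)]
    exact hpisq
  have h1ε : 0 < 1 - ε := by linarith
  obtain ⟨c, hc_def⟩ : ∃ c : ℝ, c = σ / (1 - ε) := ⟨_, rfl⟩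
  have hc : 0 < c := hc_def ▸ div_pos hσ h1ε
  obtain ⟨l, hl_def⟩ : ∃ l : ℝ, l = |Real.log (256 * c ^ 2)| := ⟨_, rfl⟩
  have hl : 0 ≤ l := hl_def ▸ abs_nonneg _
  have hlog256 : Real.log (256 * c ^ 2) ≤ l := hl_def ▸ le_abs_self _
  refine ⟨320 * c ^ 2 + 128 * c ^ 2 * l, by positivity, ?_⟩
  intro K δ Δ t hK hδ hδ2 hΔ hΔ1 ht hT
  rw [← hc_def]
  have htR : (1:ℝ) ≤ (t:ℝ) := by exact_mod_cast ht
  have htpos : (0:ℝ) < t := by linarith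
  have hΔ2 : (0:ℝ) < Δ ^ 2 := by positivity
  have hKR : (2:ℝ) ≤ (K:ℝ) := by exact_mod_cast hK
  have hKpos : (0:ℝ) < (K:ℝ) := by linarith
  obtain ⟨A, hA_def⟩ : ∃ a : ℝ, a = Real.log ((K:ℝ) / (δ * Δ)) := ⟨_, rfl⟩
  obtain ⟨X, hX_def⟩ : ∃ x : ℝ, x = Real.log ((K:ℝ) * (t:ℝ) ^ 2 * Real.pi ^ 2 / (12 * δ)) :=
    ⟨_, rfl⟩
  rw [← hA_def] at hT
  rw [← hX_def]
  have hδΔ : 0 < δ * Δ := mul_pos hδ hΔ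
  have hratio : (4:ℝ) ≤ (K:ℝ) / (δ * Δ) := by
    rw [le_div_iff₀ hδΔ]
    nlinarith
  have hA1 : 1 ≤ A := by
    rw [hA_def, Real.le_log_iff_exp_le (by linarith)]
    have := Real.exp_one_lt_d9
    linarith
  -- A ≥ log (K/δ)
  have hAKδ : Real.log ((K:ℝ)/δ) ≤ A := by
    rw [hA_def]
    apply Real.log_le_log (by positivity)
    rw [div_le_div_iff₀ hδ hδΔ]
    nlinarith [mul_nonneg (mul_pos hKpos hδ).le (by linarith : (0:ℝ) ≤ 1 - Δ)]
  -- A ≥ - log Δ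
  have hAΔ : -Real.log Δ ≤ A := by
    rw [hA_def, ← Real.log_inv, ← one_div]
    exact Real.log_le_log (by positivity)
      (by rw [div_le_div_iff₀ hΔ hδΔ]; nlinarith)
  -- decompose X
  have hXeq : X = Real.log ((K:ℝ)/δ) + 2 * Real.log (t:ℝ) + Real.log (Real.pi ^ 2 / 12) := by
    rw [hX_def]
    have h1 : (K:ℝ) * (t:ℝ) ^ 2 * Real.pi ^ 2 / (12 * δ) =
        ((K:ℝ)/δ) * ((t:ℝ) ^ 2) * (Real.pi ^ 2 / 12) := by
      field_simp
    rw [h1, Real.log_mul (by positivity) (by positivity),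
      Real.log_mul (by positivity) (by positivity), Real.log_pow]
    push_cast
    ring
  -- bound on log t
  have ha : (0:ℝ) < 256 * c ^ 2 / Δ ^ 2 := by positivity
  have hlogt : Real.log (t:ℝ) ≤ (t:ℝ) / (256 * c ^ 2 / Δ ^ 2) + Real.log (256 * c ^ 2 / Δ ^ 2) - 1 := by
    have h := Real.log_le_sub_one_of_pos (div_pos htpos ha)
    rw [Real.log_div (by linarith) (ne_of_gt ha)] at h
    linarith
  have hloga : Real.log (256 * c ^ 2 / Δ ^ 2) ≤ l + 2 * A := by
    rw [Real.log_div (by positivity) (ne_of_gt hΔ2), Real.log_pow]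
    push_cast
    linarith only [hlog256, hAΔ]
  have hdiv1 := se_aux_div c Δ (t:ℝ) (ne_of_gt hc) (ne_of_gt hΔ)
  rw [hdiv1] at hlogt
  -- hT in multiplied-out form
  have hT' : (320 * c ^ 2 + 128 * c ^ 2 * l) * A ≤ (t:ℝ) * Δ ^ 2 := by
    have h2 := mul_le_mul_of_nonneg_right hT hΔ2.le
    rw [se_aux_h3 _ _ _ (ne_of_gt hΔ)] at h2
    exact h2
  -- core inequality : 32 c² X < t Δ²
  have hX2 : X < A + 2 * (Δ ^ 2 * (t:ℝ) / (256 * c ^ 2) + l + 2 * A) := by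
    rw [hXeq]; linarith only [hlogt, hAKδ, hloga, hπ]
  have hmul := se_aux_hmul c Δ (t:ℝ) (ne_of_gt hc)
  have hlA : 128 * c ^ 2 * l ≤ 128 * c ^ 2 * (l * A) := by
    nlinarith only [mul_le_mul_of_nonneg_left hA1 (by positivity : (0:ℝ) ≤ 128 * c ^ 2 * l)]
  have hcore : 32 * c ^ 2 * X < (t:ℝ) * Δ ^ 2 := by
    have h5 := mul_lt_mul_of_pos_left hX2 (by positivity : (0:ℝ) < 32 * c ^ 2)
    have htΔ : (0:ℝ) < (t:ℝ) * Δ ^ 2 := mul_pos htpos hΔ2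
    linarith only [h5, hT', hmul, hlA, htΔ]
  -- conclude
  rcases le_or_gt ((2 / (t:ℝ)) * X) 0 with hy | hy
  · rw [Real.sqrt_eq_zero'.mpr hy, mul_zero]
    exact hΔ
  · have hsq : (4 * c * Real.sqrt ((2 / (t:ℝ)) * X)) ^ 2 = 16 * c ^ 2 * ((2 / (t:ℝ)) * X) := by
      rw [mul_pow, Real.sq_sqrt hy.le]; ring
    have h32 : 16 * c ^ 2 * ((2 / (t:ℝ)) * X) < Δ ^ 2 := by
      rw [show 16 * c ^ 2 * (2 / (t:ℝ) * X) = 32 * c ^ 2 * X / (t:ℝ) from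
        se_aux_h32 c (t:ℝ) X (ne_of_gt htpos)]
      rw [div_lt_iff₀ htpos]
      linarith only [hcore]
    have hfin : (4 * c * Real.sqrt ((2 / (t:ℝ)) * X)) ^ 2 < Δ ^ 2 := by rw [hsq]; exact h32
    exact lt_of_pow_lt_pow_left₀ 2 hΔ.le hfin
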